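/- Assume n ≥ 1. Let μ ∈ ℤ^{n+m}, let l, r be integers with 1 ≤ l ≤ m and μ_{n+l} = r − n − 1, and set λ = μ + ε_{n+l}. Then ⟨λ, λ + 2ρ⟩ − ⟨μ, μ + 2ρ⟩ − ⟨ε_1, ε_1 + 2ρ⟩ = 2(l − r). -/

import Mathlib

/-! Common definitions: the weight lattice `ℤ^{n+m}` is modeled as functions `ℕ → ℤ`
(only the coordinates `1, …, n+m` are relevant), with standard basis vectors `eps i`.
Index `i` has parity 0 if `i ≤ n` and parity 1 otherwise. -/

namespace TwoBoundary

/-- The standard basis vector `ε_i` of the weight lattice. -/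
def eps (i : ℕ) : ℕ → ℤ := fun k => if k = i then 1 else 0

/-- The sign of the positive root `ε_i − ε_j`: `+1` if it is even
(i.e. the parities of `i` and `j` agree), `−1` if it is odd. -/
def rootSign (n i j : ℕ) : ℤ := if (i ≤ n) = (j ≤ n) then 1 else -1

/-- `2ρ` = (sum of even positive roots) − (sum of odd positive roots). -/
def twoRho (n m : ℕ) : ℕ → ℤ :=
  ∑ i ∈ Finset.Icc 1 (n + m), ∑ j ∈ Finset.Icc 1 (n + m),
    if i < j then rootSign n i j • (eps i - eps j) else 0

/-- The bilinear form with `⟨ε_i, ε_j⟩ = (−1)^{parity i} δ_{ij}`. -/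
def form (n m : ℕ) (μ ν : ℕ → ℤ) : ℤ :=
  ∑ i ∈ Finset.Icc 1 (n + m), (if i ≤ n then (1 : ℤ) else -1) * (μ i * ν i)

/-- `φ_t = ε_1 + ⋯ + ε_t`. -/
def phi (t : ℕ) : ℕ → ℤ := fun k => if 1 ≤ k ∧ k ≤ t then 1 else 0

/-- `ψ_s = ε_{n+1} + ⋯ + ε_{n+s}`. -/
def psi (n s : ℕ) : ℕ → ℤ := fun k => if n + 1 ≤ k ∧ k ≤ n + s then 1 else 0

/-- A partition, given by its sequence of parts `λ_1 ≥ λ_2 ≥ ⋯` (the index-0 value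
is normalized to `0`): weakly decreasing with finitely many nonzero terms. -/
def IsPartition (lam : ℕ → ℕ) : Prop :=
  lam 0 = 0 ∧ (∀ i, 1 ≤ i → lam (i + 1) ≤ lam i) ∧ ∃ N, ∀ i, N ≤ i → lam i = 0

/-- A hook partition (relative to `(n, m)`): a partition with `λ_{n+1} ≤ m`. -/
def IsHookPartition (n m : ℕ) (lam : ℕ → ℕ) : Prop :=
  IsPartition lam ∧ lam (n + 1) ≤ m

/-- The weight `λ̄` associated to a hook partition `λ`:
`λ̄_i = λ_i` for `1 ≤ i ≤ n`, and `λ̄_{n+j} = #{k > n : λ_k ≥ j}` for `1 ≤ j ≤ m`. -/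
noncomputable def barWeight (n m : ℕ) (lam : ℕ → ℕ) : ℕ → ℤ := fun i =>
  if 1 ≤ i ∧ i ≤ n then (lam i : ℤ)
  else if n + 1 ≤ i ∧ i ≤ n + m then ({k : ℕ | n < k ∧ i - n ≤ lam k}.ncard : ℤ)
  else 0

/-- The set `𝒫₀` of partitions occurring in the decomposition of
`L((a^p)) ⊗ L((b^q))` (for `q ≤ p`), by the combinatorial description of
Okada and Stanley. -/
def InP0 (a b p q : ℕ) (lam : ℕ → ℕ) : Prop :=
  IsPartition lam ∧
  (∀ i, p + q < i → lam i = 0) ∧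
  (∀ i, 1 ≤ i → i ≤ q → lam i + lam (p + q + 1 - i) = a + b) ∧
  (∀ i, q + 1 ≤ i → i ≤ p → lam i = a) ∧
  (∀ i, 1 ≤ i → i ≤ q → max a b ≤ lam i)

lemma twoRho_apply (n m k : ℕ) (hk : k ∈ Finset.Icc 1 (n + m)) :
    twoRho n m k = (∑ j ∈ Finset.Icc 1 (n + m), if k < j then rootSign n k j else 0)
      - (∑ j ∈ Finset.Icc 1 (n + m), if j < k then rootSign n j k else 0) := by
  unfold twoRho
  simp only [Finset.sum_apply]
  have : ∀ i j : ℕ, ((if i < j then rootSign n i j • (eps i - eps j) else 0) k)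
      = (if i < j then rootSign n i j else 0) * ((if k = i then 1 else 0) - (if k = j then 1 else 0)) := by
    intro i j
    split <;> simp [eps]
  simp only [this, mul_sub]
  rw [Finset.sum_congr rfl (fun i _ => Finset.sum_sub_distrib _ _), Finset.sum_sub_distrib]
  congr 1
  · rw [Finset.sum_eq_single k]
    · exact Finset.sum_congr rfl (fun j _ => by simp)
    · intro b _ hb
      exact Finset.sum_eq_zero (fun j _ => by simp [Ne.symm hb])
    · intro h; exact absurd hk h
  · rw [Finset.sum_comm, Finset.sum_eq_single k]
    · exact Finset.sum_congr rfl (fun j _ => by simp)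
    · intro b _ hb
      exact Finset.sum_eq_zero (fun j _ => by simp [Ne.symm hb])
    · intro h; exact absurd hk h

lemma sum_Ioc_const (a b : ℕ) (c : ℤ) : (∑ _j ∈ Finset.Ioc a b, c) = (b - a : ℕ) * c := by
  rw [Finset.sum_const, Nat.card_Ioc, nsmul_eq_mul]

lemma twoRho_one (n m : ℕ) (hn : 1 ≤ n) : twoRho n m 1 = (n : ℤ) - 1 - m := by
  rw [twoRho_apply n m 1 (by simp; omega)]
  have h2 : (∑ j ∈ Finset.Icc 1 (n + m), if j < 1 then rootSign n j 1 else 0) = 0 :=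
    Finset.sum_eq_zero (fun j hj => by simp at hj ⊢; omega)
  rw [h2, sub_zero]
  have : Finset.Icc 1 (n + m) = Finset.Ioc 0 (n + m) := rfl
  rw [this, ← Finset.sum_Ioc_consecutive _ (Nat.zero_le n) (Nat.le_add_right n m),
    ← Finset.sum_Ioc_consecutive _ (Nat.zero_le 1) hn]
  have e1 : (∑ j ∈ Finset.Ioc 0 1, if 1 < j then rootSign n 1 j else 0) = 0 :=
    Finset.sum_eq_zero (fun j hj => by simp at hj ⊢; omega)
  have e2 : (∑ j ∈ Finset.Ioc 1 n, if 1 < j then rootSign n 1 j else 0)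
      = ∑ _j ∈ Finset.Ioc 1 n, (1 : ℤ) := by
    refine Finset.sum_congr rfl (fun j hj => ?_)
    simp only [Finset.mem_Ioc] at hj
    rw [if_pos hj.1]
    unfold rootSign
    rw [if_pos (eq_iff_iff.mpr (by omega))]
  have e3 : (∑ j ∈ Finset.Ioc n (n + m), if 1 < j then rootSign n 1 j else 0)
      = ∑ _j ∈ Finset.Ioc n (n + m), (-1 : ℤ) := by
    refine Finset.sum_congr rfl (fun j hj => ?_)
    simp only [Finset.mem_Ioc] at hj
    rw [if_pos (by omega)]
    unfold rootSign
    rw [if_neg (by rw [eq_iff_iff]; omega)]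
  rw [e1, e2, e3, sum_Ioc_const, sum_Ioc_const]
  omega

lemma twoRho_nl (n m l : ℕ) (hl1 : 1 ≤ l) (hlm : l ≤ m) :
    twoRho n m (n + l) = (m : ℤ) + n + 1 - 2 * l := by
  obtain ⟨l', rfl⟩ : ∃ l', l = l' + 1 := ⟨l - 1, by omega⟩
  rw [twoRho_apply n m (n + (l' + 1)) (by simp; omega)]
  have h1 : (∑ j ∈ Finset.Icc 1 (n + m), if n + (l' + 1) < j then rootSign n (n + (l' + 1)) j else 0)
      = (m - (l' + 1) : ℕ) := by
    have : Finset.Icc 1 (n + m) = Finset.Ioc 0 (n + m) := rfl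
    rw [this, ← Finset.sum_Ioc_consecutive _ (Nat.zero_le (n + (l' + 1))) (by omega : n + (l' + 1) ≤ n + m)]
    have e1 : (∑ j ∈ Finset.Ioc 0 (n + (l' + 1)), if n + (l' + 1) < j then rootSign n (n + (l' + 1)) j else 0) = 0 :=
      Finset.sum_eq_zero (fun j hj => by simp at hj ⊢; omega)
    have e2 : (∑ j ∈ Finset.Ioc (n + (l' + 1)) (n + m), if n + (l' + 1) < j then rootSign n (n + (l' + 1)) j else 0)
        = ∑ _j ∈ Finset.Ioc (n + (l' + 1)) (n + m), (1 : ℤ) := by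
      refine Finset.sum_congr rfl (fun j hj => ?_)
      simp only [Finset.mem_Ioc] at hj
      rw [if_pos hj.1]
      unfold rootSign
      rw [if_pos (eq_iff_iff.mpr (by omega))]
    rw [e1, e2, sum_Ioc_const, zero_add, mul_one]
    congr 1
    omega
  have h2 : (∑ j ∈ Finset.Icc 1 (n + m), if j < n + (l' + 1) then rootSign n j (n + (l' + 1)) else 0)
      = (l' : ℤ) - n := by
    have : Finset.Icc 1 (n + m) = Finset.Ioc 0 (n + m) := rfl
    rw [this, ← Finset.sum_Ioc_consecutive _ (Nat.zero_le (n + l' + 1)) (by omega : n + l' + 1 ≤ n + m),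
      Finset.sum_Ioc_succ_top (by omega : 0 ≤ n + l'),
      ← Finset.sum_Ioc_consecutive _ (Nat.zero_le n) (by omega : n ≤ n + l')]
    have e1 : (∑ j ∈ Finset.Ioc 0 n, if j < n + (l' + 1) then rootSign n j (n + (l' + 1)) else 0)
        = ∑ _j ∈ Finset.Ioc 0 n, (-1 : ℤ) := by
      refine Finset.sum_congr rfl (fun j hj => ?_)
      simp only [Finset.mem_Ioc] at hj
      rw [if_pos (by omega)]
      unfold rootSign
      rw [if_neg (by rw [eq_iff_iff]; omega)]
    have e2 : (∑ j ∈ Finset.Ioc n (n + l'), if j < n + (l' + 1) then rootSign n j (n + (l' + 1)) else 0)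
        = ∑ _j ∈ Finset.Ioc n (n + l'), (1 : ℤ) := by
      refine Finset.sum_congr rfl (fun j hj => ?_)
      simp only [Finset.mem_Ioc] at hj
      rw [if_pos (by omega)]
      unfold rootSign
      rw [if_pos (eq_iff_iff.mpr (by omega))]
    have e3 : (if n + l' + 1 < n + (l' + 1) then rootSign n (n + l' + 1) (n + (l' + 1)) else 0) = 0 := by
      rw [if_neg (by omega)]
    have e4 : (∑ j ∈ Finset.Ioc (n + l' + 1) (n + m), if j < n + (l' + 1) then rootSign n j (n + (l' + 1)) else 0) = 0 :=
      Finset.sum_eq_zero (fun j hj => by simp at hj ⊢; omega)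
    rw [e1, e2, e3, e4, sum_Ioc_const, sum_Ioc_const]
    omega
  rw [h1, h2]
  have : (l' : ℤ) + 1 ≤ m := by exact_mod_cast hlm
  push_cast
  omega

/-- adding a box in an odd row: if `1 ≤ l ≤ m`, `μ_{n+l} = r − n − 1` and
`λ = μ + ε_{n+l}`, then `⟨λ, λ+2ρ⟩ − ⟨μ, μ+2ρ⟩ − ⟨ε_1, ε_1+2ρ⟩ = 2(l − r)`. -/
theorem form_diff_add_odd_box (n m : ℕ) (hn : 1 ≤ n) (μ : ℕ → ℤ) (l : ℕ) (r : ℤ)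
    (hl1 : 1 ≤ l) (hlm : l ≤ m) (hμ : μ (n + l) = r - (n : ℤ) - 1) :
    form n m (μ + eps (n + l)) (μ + eps (n + l) + twoRho n m)
      - form n m μ (μ + twoRho n m)
      - form n m (eps 1) (eps 1 + twoRho n m) = 2 * ((l : ℤ) - r) := by
  have hmem : n + l ∈ Finset.Icc 1 (n + m) := by simp; omega
  have h1 : form n m (μ + eps (n + l)) (μ + eps (n + l) + twoRho n m)
      - form n m μ (μ + twoRho n m)
      = -(2 * μ (n + l) + 1 + twoRho n m (n + l)) := by
    unfold form
    rw [← Finset.sum_sub_distrib, Finset.sum_eq_single (n + l)]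
    · simp only [Pi.add_apply, eps, if_pos rfl]
      rw [if_neg (by omega)]
      norm_num
      ring
    · intro b _ hb
      simp only [Pi.add_apply, eps, if_neg hb]
      ring
    · intro h; exact absurd hmem h
  have h2 : form n m (eps 1) (eps 1 + twoRho n m) = 1 + twoRho n m 1 := by
    unfold form
    rw [Finset.sum_eq_single 1]
    · simp [eps, hn]
    · intro b _ hb
      simp [eps, hb]
    · intro h
      exact absurd (by simp; omega : 1 ∈ Finset.Icc 1 (n + m)) h
  rw [h1, h2, twoRho_nl n m l hl1 hlm, twoRho_one n m hn, hμ]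
  push_cast
  ring

end TwoBoundary
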